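/- Let u be a positive continuous solution of the integral equation (IE). Then for every x ∈ ℝⁿ, every λ > 0, and every ξ ∈ ℝⁿ with |ξ − x| > λ, one has u(ξ) − u_{x,λ}(ξ) = γ ∫_{|z−x| ≥ λ} K(x,λ;ξ,z) · G(z) dz, where G(z) := ε (2/(1+|z|²))^{2s} u(z) + (2/(1+|z|²))^{σ} u(z)^{α} − ε (2λ²/(1 + |z^{x,λ}|²))^{2s} |z − x|^{−4s} u_{x,λ}(z) − (2λ²/(1 + |z^{x,λ}|²))^{σ} |z − x|^{−2σ} u_{x,λ}(z)^{α}, and the integrand is Lebesgue integrable on {z : |z − x| ≥ λ}. -/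

import Mathlib

open MeasureTheory

/-- Inversion of `ξ` in the sphere of radius `l` centered at `x`. -/
noncomputable def sphereInversion {n : ℕ} (x : EuclideanSpace ℝ (Fin n)) (l : ℝ)
    (ξ : EuclideanSpace ℝ (Fin n)) : EuclideanSpace ℝ (Fin n) :=
  x + (l ^ 2 / ‖ξ - x‖ ^ 2) • (ξ - x)

/-- The Kelvin transform `u_{x,λ}` of `u` (with exponent `n − 2s`). -/
noncomputable def kelvin {n : ℕ} (s : ℝ) (u : EuclideanSpace ℝ (Fin n) → ℝ)
    (x : EuclideanSpace ℝ (Fin n)) (l : ℝ) (ξ : EuclideanSpace ℝ (Fin n)) : ℝ :=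
  (l / ‖ξ - x‖) ^ ((n : ℝ) - 2 * s) * u (sphereInversion x l ξ)

/-- The moving-spheres kernel `K(x,λ;ξ,z)`. -/
noncomputable def msKernel {n : ℕ} (s : ℝ) (x : EuclideanSpace ℝ (Fin n)) (l : ℝ)
    (ξ z : EuclideanSpace ℝ (Fin n)) : ℝ :=
  ‖ξ - z‖ ^ (-((n : ℝ) - 2 * s))
    - (l / ‖ξ - x‖) ^ ((n : ℝ) - 2 * s) * ‖sphereInversion x l ξ - z‖ ^ (-((n : ℝ) - 2 * s))

/-- The nonlinearity `F_{ε,u}(y) = ε (2/(1+|y|²))^{2s} u(y) + (2/(1+|y|²))^{σ} u(y)^{α}`. -/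
noncomputable def ieF {n : ℕ} (s σ α ε : ℝ) (u : EuclideanSpace ℝ (Fin n) → ℝ)
    (y : EuclideanSpace ℝ (Fin n)) : ℝ :=
  ε * (2 / (1 + ‖y‖ ^ 2)) ^ (2 * s) * u y + (2 / (1 + ‖y‖ ^ 2)) ^ σ * u y ^ α

/-- `u` is a positive continuous solution of the integral equation (IE). -/
def IsIESolution {n : ℕ} (s σ α ε γ : ℝ) (u : EuclideanSpace ℝ (Fin n) → ℝ) : Prop :=
  Continuous u ∧ (∀ y, 0 < u y) ∧
    ∀ x : EuclideanSpace ℝ (Fin n),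
      Integrable (fun y => ‖x - y‖ ^ (2 * s - (n : ℝ)) * ieF s σ α ε u y) ∧
      u x = γ * ∫ y, ‖x - y‖ ^ (2 * s - (n : ℝ)) * ieF s σ α ε u y

/-- The difference term `G(z)` in Lemma on `u − u_{x,λ}`. -/
noncomputable def ieG {n : ℕ} (s σ α ε : ℝ) (u : EuclideanSpace ℝ (Fin n) → ℝ)
    (x : EuclideanSpace ℝ (Fin n)) (l : ℝ) (z : EuclideanSpace ℝ (Fin n)) : ℝ :=
  ε * (2 / (1 + ‖z‖ ^ 2)) ^ (2 * s) * u z + (2 / (1 + ‖z‖ ^ 2)) ^ σ * u z ^ α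
    - ε * (2 * l ^ 2 / (1 + ‖sphereInversion x l z‖ ^ 2)) ^ (2 * s)
        * ‖z - x‖ ^ (-(4 * s)) * kelvin s u x l z
    - (2 * l ^ 2 / (1 + ‖sphereInversion x l z‖ ^ 2)) ^ σ
        * ‖z - x‖ ^ (-(2 * σ)) * kelvin s u x l z ^ α

section Aux

open EuclideanGeometry Metric Set

variable {n : ℕ}

lemma sphereInversion_eq (x : EuclideanSpace ℝ (Fin n)) (l : ℝ)
    (ξ : EuclideanSpace ℝ (Fin n)) :
    sphereInversion x l ξ = EuclideanGeometry.inversion x l ξ := by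
  simp only [sphereInversion, EuclideanGeometry.inversion, vsub_eq_sub, vadd_eq_add,
    dist_eq_norm, div_pow, add_comm]

lemma norm_inversion_sub_center (x : EuclideanSpace ℝ (Fin n)) (l : ℝ)
    (z : EuclideanSpace ℝ (Fin n)) :
    ‖EuclideanGeometry.inversion x l z - x‖ = l ^ 2 / ‖z - x‖ := by
  rw [← dist_eq_norm, ← dist_eq_norm, EuclideanGeometry.dist_inversion_center]

/-- determinant of the derivative of the inversion map -/
lemma abs_det_smul_reflection (hn : 0 < n) (c : ℝ)
    (K : Submodule ℝ (EuclideanSpace ℝ (Fin n))) [K.HasOrthogonalProjection] :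
    |(c • ((K.reflection : EuclideanSpace ℝ (Fin n) ≃ₗᵢ[ℝ] EuclideanSpace ℝ (Fin n)) :
        EuclideanSpace ℝ (Fin n) →L[ℝ] EuclideanSpace ℝ (Fin n))).det| = |c| ^ n := by
  set E := EuclideanSpace ℝ (Fin n)
  set R : E →L[ℝ] E := ((K.reflection : E ≃ₗᵢ[ℝ] E) : E →L[ℝ] E) with hR
  have hRR : (R : E →ₗ[ℝ] E).comp (R : E →ₗ[ℝ] E) = LinearMap.id := by
    ext v
    simp [hR, Submodule.reflection_reflection]
  have hdet : (R : E →ₗ[ℝ] E).det * (R : E →ₗ[ℝ] E).det = 1 := by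
    rw [← LinearMap.det_comp, hRR, LinearMap.det_id]
  have habs : |(R : E →ₗ[ℝ] E).det| = 1 := by
    rcases mul_self_eq_one_iff.1 hdet with h | h <;> rw [h] <;> norm_num
  have hcoe : ((c • R : E →L[ℝ] E) : E →ₗ[ℝ] E) = c • (R : E →ₗ[ℝ] E) := rfl
  rw [ContinuousLinearMap.det, hcoe, LinearMap.det_smul, abs_mul, abs_pow, habs, mul_one,
    finrank_euclideanSpace_fin]

/-- Change of variables by inversion. -/
lemma inversion_cov (hn : 0 < n) (x : EuclideanSpace ℝ (Fin n)) {l : ℝ} (hl : 0 < l)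
    (g : EuclideanSpace ℝ (Fin n) → ℝ) :
    (IntegrableOn g {z : EuclideanSpace ℝ (Fin n) | 0 < ‖z - x‖ ∧ ‖z - x‖ ≤ l} ↔
      IntegrableOn
        (fun w => (l ^ 2 / ‖w - x‖ ^ 2) ^ n * g (EuclideanGeometry.inversion x l w))
        {w : EuclideanSpace ℝ (Fin n) | l ≤ ‖w - x‖}) ∧
    ∫ z in {z : EuclideanSpace ℝ (Fin n) | 0 < ‖z - x‖ ∧ ‖z - x‖ ≤ l}, g z =
      ∫ w in {w : EuclideanSpace ℝ (Fin n) | l ≤ ‖w - x‖},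
        (l ^ 2 / ‖w - x‖ ^ 2) ^ n * g (EuclideanGeometry.inversion x l w) := by
  set A : Set (EuclideanSpace ℝ (Fin n)) := {w | l ≤ ‖w - x‖} with hAdef
  have hA : MeasurableSet A := by
    have : IsClosed A := isClosed_le continuous_const (by fun_prop)
    exact this.measurableSet
  -- points of A are different from x
  have hAx : ∀ w ∈ A, w ≠ x := by
    intro w hw h
    rw [h] at hw
    simp only [hAdef, mem_setOf_eq, sub_self, norm_zero] at hw
    exact absurd hw (not_le.2 hl)
  have hdistA : ∀ w ∈ A, l ≤ dist w x := by
    intro w hw; rw [dist_eq_norm]; exact hw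
  -- derivative
  set f' : EuclideanSpace ℝ (Fin n) → EuclideanSpace ℝ (Fin n) →L[ℝ] EuclideanSpace ℝ (Fin n) := fun w =>
    ((l / dist w x) ^ 2) • (Submodule.reflection (ℝ ∙ (w - x))ᗮ : EuclideanSpace ℝ (Fin n) →L[ℝ] EuclideanSpace ℝ (Fin n)) with hf'def
  have hf' : ∀ w ∈ A, HasFDerivWithinAt (inversion x l) (f' w) A w := fun w hw =>
    (hasFDerivAt_inversion (hAx w hw)).hasFDerivWithinAt
  have hinj : InjOn (inversion x l) A := by
    intro a ha b hb h
    have := congrArg (inversion x l) h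
    rwa [inversion_inversion x hl.ne' a, inversion_inversion x hl.ne' b] at this
  have himg : inversion x l '' A = {z : EuclideanSpace ℝ (Fin n) | 0 < ‖z - x‖ ∧ ‖z - x‖ ≤ l} := by
    ext z
    constructor
    · rintro ⟨w, hw, rfl⟩
      have hwx : (0:ℝ) < ‖w - x‖ := lt_of_lt_of_le hl hw
      have h1 : ‖inversion x l w - x‖ = l ^ 2 / ‖w - x‖ := by
        rw [← dist_eq_norm, ← dist_eq_norm, dist_inversion_center]
      have hw' : l ≤ ‖w - x‖ := hw
      constructor
      · rw [h1]; positivity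
      · rw [h1, div_le_iff₀ hwx]
        calc l ^ 2 = l * l := sq l
        _ ≤ l * ‖w - x‖ := by nlinarith
    · rintro ⟨hz0, hzl⟩
      have hzx : z ≠ x := by
        intro h; rw [h] at hz0; simp at hz0
      refine ⟨inversion x l z, ?_, inversion_inversion x hl.ne' z⟩
      have h1 : ‖inversion x l z - x‖ = l ^ 2 / ‖z - x‖ := by
        rw [← dist_eq_norm, ← dist_eq_norm, dist_inversion_center]
      simp only [hAdef, mem_setOf_eq, h1]
      rw [le_div_iff₀ hz0]
      calc l * ‖z - x‖ ≤ l * l := by nlinarith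
      _ = l ^ 2 := (sq l).symm
  have hdet : ∀ w ∈ A, |(f' w).det| = (l ^ 2 / ‖w - x‖ ^ 2) ^ n := by
    intro w hw
    have hwx : (0:ℝ) < ‖w - x‖ := lt_of_lt_of_le hl hw
    have key : |(f' w).det| = |(l / dist w x) ^ 2| ^ n :=
      abs_det_smul_reflection hn ((l / dist w x) ^ 2) (ℝ ∙ (w - x))ᗮ
    rw [key, dist_eq_norm, abs_of_nonneg (by positivity : (0:ℝ) ≤ (l / ‖w - x‖) ^ 2),
      div_pow]
  constructor
  · rw [← himg, integrableOn_image_iff_integrableOn_abs_det_fderiv_smul volume hA hf' hinj g]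
    exact integrableOn_congr_fun (fun w hw => by rw [hdet w hw, smul_eq_mul]) hA
  · rw [← himg, integral_image_eq_integral_abs_det_fderiv_smul volume hA hf' hinj g]
    exact setIntegral_congr_fun hA (fun w hw => by rw [hdet w hw, smul_eq_mul])


lemma rpow_term (l r c v d e p : ℝ) (hl : 0 < l) (hr : 0 < r) (hc : 0 < c) (hv : 0 < v) :
    (2 * l ^ 2 / c) ^ e * r ^ (-(2 * e)) * ((l / r) ^ d * v) ^ p
      = (l / r) ^ (2 * e + d * p) * ((2 / c) ^ e * v ^ p) := by
  have hlr : (0:ℝ) < l / r := by positivity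
  have h2 : (2 * l ^ 2 / c) ^ e = (2 / c) ^ e * l ^ (2 * e) := by
    rw [show 2 * l ^ 2 / c = (2 / c) * l ^ 2 by ring,
      Real.mul_rpow (by positivity) (by positivity),
      ← Real.rpow_natCast l 2, ← Real.rpow_mul hl.le]
    norm_num
  have h3 : ((l / r) ^ d * v) ^ p = (l / r) ^ (d * p) * v ^ p := by
    rw [Real.mul_rpow (by positivity) hv.le, ← Real.rpow_mul hlr.le]
  have h4 : (l / r) ^ (2 * e + d * p) = (l / r) ^ (2 * e) * (l / r) ^ (d * p) :=
    Real.rpow_add hlr _ _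
  have h5 : (l / r) ^ (2 * e) = l ^ (2 * e) * (r ^ (2 * e))⁻¹ := by
    rw [Real.div_rpow hl.le hr.le, div_eq_mul_inv]
  have h6 : r ^ (-(2 * e)) = (r ^ (2 * e))⁻¹ := Real.rpow_neg hr.le _
  rw [h2, h3, h4, h5, h6]
  ring

lemma ieG_eq {n : ℕ} (s σ α ε : ℝ)
    (hσ : σ = ((n : ℝ) + 2 * s) / 2 - α * ((n : ℝ) - 2 * s) / 2)
    (u : EuclideanSpace ℝ (Fin n) → ℝ) (hu : ∀ y, 0 < u y)
    (x : EuclideanSpace ℝ (Fin n)) {l : ℝ} (hl : 0 < l)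
    {z : EuclideanSpace ℝ (Fin n)} (hz : l ≤ ‖z - x‖) :
    ieG s σ α ε u x l z
      = ieF s σ α ε u z
        - (l / ‖z - x‖) ^ ((n : ℝ) + 2 * s) * ieF s σ α ε u (sphereInversion x l z) := by
  have hr : (0:ℝ) < ‖z - x‖ := lt_of_lt_of_le hl hz
  have hc : (0:ℝ) < 1 + ‖sphereInversion x l z‖ ^ 2 := by positivity
  have e1 := rpow_term l ‖z - x‖ (1 + ‖sphereInversion x l z‖ ^ 2)
    (u (sphereInversion x l z)) ((n:ℝ) - 2 * s) (2 * s) 1 hl hr hc (hu _)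
  have e2 := rpow_term l ‖z - x‖ (1 + ‖sphereInversion x l z‖ ^ 2)
    (u (sphereInversion x l z)) ((n:ℝ) - 2 * s) σ α hl hr hc (hu _)
  rw [Real.rpow_one, Real.rpow_one] at e1
  rw [show 2 * (2 * s) + ((n:ℝ) - 2 * s) * 1 = (n:ℝ) + 2 * s by ring] at e1
  rw [show 2 * σ + ((n:ℝ) - 2 * s) * α = (n:ℝ) + 2 * s by rw [hσ]; ring] at e2
  simp only [ieG, ieF, kelvin]
  rw [show -(4 * s) = -(2 * (2 * s)) by ring]
  linear_combination (-ε) * e1 - e2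

lemma scalar_kernel (n : ℕ) (s l r b t m : ℝ) (hl : 0 < l) (hr : 0 < r) (hb : 0 < b)
    (hm : 0 < m) (ht : 0 ≤ t) :
    (l ^ 2 / r ^ 2) ^ n * ((b * m / r) ^ (-((n:ℝ) - 2 * s))
        - (l / b) ^ ((n:ℝ) - 2 * s) * (l ^ 2 * t / (b * r)) ^ (-((n:ℝ) - 2 * s)))
      = -(t ^ (-((n:ℝ) - 2 * s)) - (l / b) ^ ((n:ℝ) - 2 * s) * m ^ (-((n:ℝ) - 2 * s)))
          * (l / r) ^ ((n:ℝ) + 2 * s) := by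
  have hA1 : (l ^ 2 / r ^ 2) ^ n = (l / r) ^ (2 * (n:ℝ)) := by
    rw [← div_pow, ← pow_mul, ← Real.rpow_natCast (l / r) (2 * n)]
    congr 1; push_cast; ring
  have r1 : (b * m / r) ^ (-((n:ℝ) - 2 * s))
      = (b / r) ^ (-((n:ℝ) - 2 * s)) * m ^ (-((n:ℝ) - 2 * s)) := by
    rw [show b * m / r = (b / r) * m by ring, Real.mul_rpow (by positivity) hm.le]
  have r2 : (l ^ 2 * t / (b * r)) ^ (-((n:ℝ) - 2 * s))
      = (l ^ 2 / (b * r)) ^ (-((n:ℝ) - 2 * s)) * t ^ (-((n:ℝ) - 2 * s)) := by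
    rw [show l ^ 2 * t / (b * r) = (l ^ 2 / (b * r)) * t by ring,
      Real.mul_rpow (by positivity) ht]
  have c1 : (l / r) ^ (2 * (n:ℝ)) * (b / r) ^ (-((n:ℝ) - 2 * s))
      = (l / b) ^ ((n:ℝ) - 2 * s) * (l / r) ^ ((n:ℝ) + 2 * s) := by
    rw [Real.rpow_def_of_pos (by positivity), Real.rpow_def_of_pos (by positivity),
      Real.rpow_def_of_pos (by positivity), Real.rpow_def_of_pos (by positivity),
      ← Real.exp_add, ← Real.exp_add]
    congr 1
    rw [Real.log_div hl.ne' hr.ne', Real.log_div hb.ne' hr.ne', Real.log_div hl.ne' hb.ne']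
    ring
  have c2 : (l / r) ^ (2 * (n:ℝ))
        * ((l / b) ^ ((n:ℝ) - 2 * s) * (l ^ 2 / (b * r)) ^ (-((n:ℝ) - 2 * s)))
      = (l / r) ^ ((n:ℝ) + 2 * s) := by
    rw [Real.rpow_def_of_pos (by positivity), Real.rpow_def_of_pos (by positivity),
      Real.rpow_def_of_pos (by positivity), Real.rpow_def_of_pos (by positivity),
      ← Real.exp_add, ← Real.exp_add]
    congr 1
    rw [Real.log_div hl.ne' hr.ne', Real.log_div hl.ne' hb.ne',
      Real.log_div (by positivity : (l:ℝ) ^ 2 ≠ 0) (by positivity : b * r ≠ 0),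
      Real.log_mul hb.ne' hr.ne', Real.log_pow]
    push_cast; ring
  rw [hA1, r1, r2]
  linear_combination m ^ (-((n:ℝ) - 2 * s)) * c1 - t ^ (-((n:ℝ) - 2 * s)) * c2

lemma kernel_eq {n : ℕ} (s : ℝ)
    (x : EuclideanSpace ℝ (Fin n)) {l : ℝ} (hl : 0 < l)
    {ξ : EuclideanSpace ℝ (Fin n)} (hξ : l < ‖ξ - x‖)
    {z : EuclideanSpace ℝ (Fin n)} (hz : l ≤ ‖z - x‖) :
    (l ^ 2 / ‖z - x‖ ^ 2) ^ n *
        (‖ξ - EuclideanGeometry.inversion x l z‖ ^ (2 * s - (n : ℝ))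
          - (l / ‖ξ - x‖) ^ ((n : ℝ) - 2 * s)
            * ‖sphereInversion x l ξ - EuclideanGeometry.inversion x l z‖ ^ (2 * s - (n : ℝ)))
      = -(msKernel s x l ξ z) * (l / ‖z - x‖) ^ ((n : ℝ) + 2 * s) := by
  have hb : (0:ℝ) < ‖ξ - x‖ := lt_trans hl hξ
  have hr : (0:ℝ) < ‖z - x‖ := lt_of_lt_of_le hl hz
  have hξx : ξ ≠ x := fun h => by simp [h] at hb
  have hzx : z ≠ x := fun h => by simp [h] at hr
  have hinvξx : EuclideanGeometry.inversion x l ξ ≠ x :=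
    fun h => hξx ((EuclideanGeometry.inversion_eq_center hl.ne').mp h)
  have hinvcenter : ‖EuclideanGeometry.inversion x l ξ - x‖ = l ^ 2 / ‖ξ - x‖ :=
    norm_inversion_sub_center x l ξ
  have hm : (0:ℝ) < ‖EuclideanGeometry.inversion x l ξ - z‖ := by
    rw [norm_sub_pos_iff]
    intro h
    rw [← h, hinvcenter] at hz
    have : l ^ 2 / ‖ξ - x‖ < l := by
      rw [div_lt_iff₀ hb]; nlinarith
    linarith
  have n1 : ‖ξ - EuclideanGeometry.inversion x l z‖
      = ‖ξ - x‖ * ‖EuclideanGeometry.inversion x l ξ - z‖ / ‖z - x‖ := by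
    have h := EuclideanGeometry.dist_inversion_inversion hinvξx hzx l
    rw [EuclideanGeometry.inversion_inversion x hl.ne' ξ] at h
    simp only [dist_eq_norm] at h
    rw [hinvcenter] at h
    rw [h]
    field_simp
  have n2 : ‖EuclideanGeometry.inversion x l ξ - EuclideanGeometry.inversion x l z‖
      = l ^ 2 * ‖ξ - z‖ / (‖ξ - x‖ * ‖z - x‖) := by
    have h := EuclideanGeometry.dist_inversion_inversion hξx hzx l
    simp only [dist_eq_norm] at h
    rw [h]; ring
  rw [sphereInversion_eq, n1, n2, msKernel, sphereInversion_eq,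
    show 2 * s - (n:ℝ) = -((n:ℝ) - 2 * s) by ring]
  exact scalar_kernel n s l ‖z - x‖ ‖ξ - x‖ ‖ξ - z‖ ‖EuclideanGeometry.inversion x l ξ - z‖
    hl hr hb hm (norm_nonneg _)

end Aux

/-- representation of `u − u_{x,λ}` via the moving-spheres kernel. -/
theorem stmt_7 (n : ℕ) (s α ε γ σ : ℝ)
    (hs : 0 < 2 * s) (hns : 2 * s < (n : ℝ))
    (hα : 0 < α) (hα' : α ≤ ((n : ℝ) + 2 * s) / ((n : ℝ) - 2 * s))
    (hε : 0 ≤ ε) (hγ : 0 < γ)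
    (hσ : σ = ((n : ℝ) + 2 * s) / 2 - α * ((n : ℝ) - 2 * s) / 2)
    (u : EuclideanSpace ℝ (Fin n) → ℝ) (hu : IsIESolution s σ α ε γ u)
    (x : EuclideanSpace ℝ (Fin n)) (l : ℝ) (hl : 0 < l)
    (ξ : EuclideanSpace ℝ (Fin n)) (hξ : l < ‖ξ - x‖) :
    IntegrableOn (fun z => msKernel s x l ξ z * ieG s σ α ε u x l z)
        {z : EuclideanSpace ℝ (Fin n) | l ≤ ‖z - x‖} ∧
    u ξ - kelvin s u x l ξ
      = γ * ∫ z in {z : EuclideanSpace ℝ (Fin n) | l ≤ ‖z - x‖},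
          msKernel s x l ξ z * ieG s σ α ε u x l z := by
  obtain ⟨hcont, hupos, hsol⟩ := hu
  have hn : 0 < n := by
    have h0 : (0:ℝ) < (n:ℝ) := lt_trans hs hns
    exact_mod_cast h0
  haveI : Nonempty (Fin n) := ⟨⟨0, hn⟩⟩
  haveI : Nontrivial (EuclideanSpace ℝ (Fin n)) := by infer_instance
  set F : EuclideanSpace ℝ (Fin n) → ℝ := ieF s σ α ε u with hF
  set k : EuclideanSpace ℝ (Fin n) → EuclideanSpace ℝ (Fin n) → ℝ :=
    fun p y => ‖p - y‖ ^ (2 * s - (n:ℝ)) * F y with hk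
  have key : ∀ p : EuclideanSpace ℝ (Fin n),
      Integrable (k p) ∧ u p = γ * ∫ y, k p y := hsol
  set A : Set (EuclideanSpace ℝ (Fin n)) := {z | l ≤ ‖z - x‖} with hAdef
  have hA : MeasurableSet A :=
    (isClosed_le continuous_const (by fun_prop)).measurableSet
  set T : Set (EuclideanSpace ℝ (Fin n)) := {z | 0 < ‖z - x‖ ∧ ‖z - x‖ ≤ l} with hTdef
  have hb : (0:ℝ) < ‖ξ - x‖ := lt_trans hl hξ
  have hAc : Aᶜ = Metric.ball x l := by
    ext z
    simp [hAdef, Metric.mem_ball, dist_eq_norm, not_le]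
  have hTae : (Metric.ball x l : Set (EuclideanSpace ℝ (Fin n))) =ᵐ[volume] T := by
    rw [MeasureTheory.ae_eq_set]
    constructor
    · refine measure_mono_null ?_ (measure_singleton x)
      rintro z ⟨hz1, hz2⟩
      simp only [Metric.mem_ball, dist_eq_norm] at hz1
      simp only [hTdef, Set.mem_setOf_eq, not_and, not_le] at hz2
      have hzx : z = x := by
        by_contra hne
        exact absurd hz1 (not_lt.2 (hz2 (norm_sub_pos_iff.2 hne)).le)
      simp [hzx]
    · refine measure_mono_null ?_ (MeasureTheory.Measure.addHaar_sphere volume x l)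
      rintro z ⟨hz1, hz2⟩
      simp only [hTdef, Set.mem_setOf_eq] at hz1
      simp only [Metric.mem_ball, dist_eq_norm, not_lt] at hz2
      simp [Metric.mem_sphere, dist_eq_norm, le_antisymm hz1.2 hz2]
  have main : ∀ p : EuclideanSpace ℝ (Fin n),
      IntegrableOn
        (fun w => (l ^ 2 / ‖w - x‖ ^ 2) ^ n * k p (EuclideanGeometry.inversion x l w)) A ∧
      (∫ y, k p y) = (∫ z in A, k p z)
        + ∫ w in A, (l ^ 2 / ‖w - x‖ ^ 2) ^ n * k p (EuclideanGeometry.inversion x l w) := by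
    intro p
    have hint : Integrable (k p) := (key p).1
    have cov := inversion_cov hn x hl (k p)
    have hT : IntegrableOn (k p) T := hint.integrableOn
    refine ⟨cov.1.mp hT, ?_⟩
    have hsplit := MeasureTheory.integral_add_compl hA hint
    rw [hAc] at hsplit
    rw [← hsplit, MeasureTheory.setIntegral_congr_set hTae, cov.2]
  obtain ⟨hIξA, hsplitξ⟩ := main ξ
  obtain ⟨hIηA, hsplitη⟩ := main (sphereInversion x l ξ)
  have i1 : IntegrableOn (k ξ) A := (key ξ).1.integrableOn
  have i2 : IntegrableOn (k (sphereInversion x l ξ)) A := (key _).1.integrableOn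
  set φ : EuclideanSpace ℝ (Fin n) → ℝ := fun z =>
    k ξ z + (l ^ 2 / ‖z - x‖ ^ 2) ^ n * k ξ (EuclideanGeometry.inversion x l z)
      - (l / ‖ξ - x‖) ^ ((n:ℝ) - 2 * s)
        * (k (sphereInversion x l ξ) z
          + (l ^ 2 / ‖z - x‖ ^ 2) ^ n
            * k (sphereInversion x l ξ) (EuclideanGeometry.inversion x l z)) with hφ
  have hφint : IntegrableOn φ A :=
    (i1.add hIξA).sub ((i2.add hIηA).const_mul _)
  have hφeq : ∀ z ∈ A, φ z = msKernel s x l ξ z * ieG s σ α ε u x l z := by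
    intro z hz
    have hzA : l ≤ ‖z - x‖ := hz
    have hker := kernel_eq s x hl hξ hzA
    have hG := ieG_eq s σ α ε hσ u hupos x hl hzA
    have hms : msKernel s x l ξ z
        = ‖ξ - z‖ ^ (2 * s - (n:ℝ))
          - (l / ‖ξ - x‖) ^ ((n:ℝ) - 2 * s)
            * ‖sphereInversion x l ξ - z‖ ^ (2 * s - (n:ℝ)) := by
      rw [msKernel, show -((n:ℝ) - 2 * s) = 2 * s - (n:ℝ) by ring]
    simp only [hφ, hk, hF]
    rw [hG, sphereInversion_eq x l z]
    linear_combination ieF s σ α ε u (EuclideanGeometry.inversion x l z) * hker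
      - ieF s σ α ε u z * hms
  have h3 : ∫ z in A, φ z
      = (∫ z in A, k ξ z)
        + (∫ w in A, (l ^ 2 / ‖w - x‖ ^ 2) ^ n * k ξ (EuclideanGeometry.inversion x l w))
        - (l / ‖ξ - x‖) ^ ((n:ℝ) - 2 * s)
          * ((∫ z in A, k (sphereInversion x l ξ) z)
            + ∫ w in A, (l ^ 2 / ‖w - x‖ ^ 2) ^ n
                * k (sphereInversion x l ξ) (EuclideanGeometry.inversion x l w)) := by
    have ia : IntegrableOn (fun z => k ξ z
        + (l ^ 2 / ‖z - x‖ ^ 2) ^ n * k ξ (EuclideanGeometry.inversion x l z)) A :=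
      i1.add hIξA
    have ib : IntegrableOn (fun z => (l / ‖ξ - x‖) ^ ((n:ℝ) - 2 * s)
        * (k (sphereInversion x l ξ) z + (l ^ 2 / ‖z - x‖ ^ 2) ^ n
            * k (sphereInversion x l ξ) (EuclideanGeometry.inversion x l z))) A :=
      (i2.add hIηA).const_mul _
    simp only [hφ]
    rw [MeasureTheory.integral_sub ia ib,
      MeasureTheory.integral_add i1 hIξA, MeasureTheory.integral_const_mul,
      MeasureTheory.integral_add i2 hIηA]
  have h1 : u ξ = γ * ((∫ z in A, k ξ z)
      + ∫ w in A, (l ^ 2 / ‖w - x‖ ^ 2) ^ n * k ξ (EuclideanGeometry.inversion x l w)) := by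
    rw [(key ξ).2, hsplitξ]
  have h2 : u (sphereInversion x l ξ) = γ * ((∫ z in A, k (sphereInversion x l ξ) z)
      + ∫ w in A, (l ^ 2 / ‖w - x‖ ^ 2) ^ n
          * k (sphereInversion x l ξ) (EuclideanGeometry.inversion x l w)) := by
    rw [(key (sphereInversion x l ξ)).2, hsplitη]
  constructor
  · exact hφint.congr_fun hφeq hA
  · have hfinal : u ξ - kelvin s u x l ξ = γ * ∫ z in A, φ z := by
      rw [h3, h1, show kelvin s u x l ξ
        = (l / ‖ξ - x‖) ^ ((n:ℝ) - 2 * s) * u (sphereInversion x l ξ) from rfl, h2]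
      ring
    rw [hfinal, MeasureTheory.setIntegral_congr_fun hA hφeq]
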